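/- arXiv:2510.03912 — 4 statements merged into one kernel-verified Lean document; each statement's English description precedes it below -/
import Mathlib

section
/- Let Φ and U be random d×M real matrices and V a random M×M real matrix on a probability space, with V almost surely symmetric positive definite. Assume all entries of Φ Uᵀ, Φ V Φᵀ and U V⁻¹ Uᵀ are integrable. Set W = E[Φ Uᵀ], Σ = E[Φ V Φᵀ] and G = E[U V⁻¹ Uᵀ], and assume W is invertible, Σ is positive definite and G is invertible. Then W⁻¹ Σ (W⁻¹)ᵀ ⪰ G⁻¹ in the Loewner order. (This is the efficiency bound underlying Theorem 1(2): among all generalized estimating equations indexed by Φ, the asymptotic covariance sandwich W⁻¹(Φ)Σ(Φ)W⁻¹(Φ)ᵀ is bounded below by the one attained at the optimal choice.) -/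
open MeasureTheory Matrix

/-- Entrywise expectation of a random matrix. -/
noncomputable def matExp {Ω : Type*} [MeasurableSpace Ω] (μ : Measure Ω)
    {m n : Type*} (f : Ω → Matrix m n ℝ) : Matrix m n ℝ :=
  Matrix.of fun i j => ∫ ω, f ω i j ∂μ

set_option linter.unusedSectionVars false

section Aux

variable {Ω : Type*} [MeasurableSpace Ω] {μ : Measure Ω}
variable {m n p : Type*} [Fintype m] [Fintype n] [Fintype p]

lemma matExp_congr_ae {f g : Ω → Matrix m n ℝ} (h : ∀ᵐ ω ∂μ, f ω = g ω) :
    matExp μ f = matExp μ g := by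
  ext i j
  exact integral_congr_ae (h.mono fun ω hω => congrArg (fun A => A i j) hω)

lemma integrable_matMul_const {f : Ω → Matrix m n ℝ}
    (hf : ∀ i j, Integrable (fun ω => f ω i j) μ) (C : Matrix n p ℝ) :
    ∀ i j, Integrable (fun ω => (f ω * C) i j) μ := fun i j => by
  simpa [Matrix.mul_apply] using integrable_finset_sum _ fun k _ => (hf i k).mul_const (C k j)

lemma integrable_const_matMul {f : Ω → Matrix n p ℝ}
    (hf : ∀ i j, Integrable (fun ω => f ω i j) μ) (C : Matrix m n ℝ) :
    ∀ i j, Integrable (fun ω => (C * f ω) i j) μ := fun i j => by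
  simpa [Matrix.mul_apply] using integrable_finset_sum _ fun k _ => (hf k j).const_mul (C i k)

lemma matExp_matMul_const {f : Ω → Matrix m n ℝ}
    (hf : ∀ i j, Integrable (fun ω => f ω i j) μ) (C : Matrix n p ℝ) :
    matExp μ (fun ω => f ω * C) = matExp μ f * C := by
  ext i j
  simp only [matExp, Matrix.mul_apply, Matrix.of_apply]
  rw [integral_finset_sum _ fun k _ => (hf i k).mul_const (C k j)]
  simp [integral_mul_const]

lemma matExp_const_matMul {f : Ω → Matrix n p ℝ}
    (hf : ∀ i j, Integrable (fun ω => f ω i j) μ) (C : Matrix m n ℝ) :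
    matExp μ (fun ω => C * f ω) = C * matExp μ f := by
  ext i j
  simp only [matExp, Matrix.mul_apply, Matrix.of_apply]
  rw [integral_finset_sum _ fun k _ => (hf k j).const_mul (C i k)]
  simp [integral_const_mul]

lemma matExp_add {f g : Ω → Matrix m n ℝ}
    (hf : ∀ i j, Integrable (fun ω => f ω i j) μ)
    (hg : ∀ i j, Integrable (fun ω => g ω i j) μ) :
    matExp μ (fun ω => f ω + g ω) = matExp μ f + matExp μ g := by
  ext i j
  simpa [matExp] using integral_add (hf i j) (hg i j)

lemma matExp_sub {f g : Ω → Matrix m n ℝ}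
    (hf : ∀ i j, Integrable (fun ω => f ω i j) μ)
    (hg : ∀ i j, Integrable (fun ω => g ω i j) μ) :
    matExp μ (fun ω => f ω - g ω) = matExp μ f - matExp μ g := by
  ext i j
  simpa [matExp] using integral_sub (hf i j) (hg i j)

lemma matExp_posSemidef {d : ℕ} {f : Ω → Matrix (Fin d) (Fin d) ℝ}
    (hf : ∀ i j, Integrable (fun ω => f ω i j) μ)
    (hpsd : ∀ᵐ ω ∂μ, (f ω).PosSemidef) :
    (matExp μ f).PosSemidef := by
  rw [posSemidef_iff_dotProduct_mulVec]
  constructor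
  · ext i j
    simp only [matExp, conjTranspose_apply, Matrix.of_apply, star_trivial]
    refine integral_congr_ae (hpsd.mono fun ω hω => ?_)
    have := hω.1
    calc f ω j i = (f ω)ᴴ i j := by simp [conjTranspose_apply]
    _ = f ω i j := by rw [this]
  · intro x
    have key : dotProduct (star x) ((matExp μ f) *ᵥ x)
        = ∫ ω, dotProduct (star x) ((f ω) *ᵥ x) ∂μ := by
      simp only [dotProduct, mulVec, matExp, Matrix.of_apply, star_trivial]
      rw [integral_finset_sum _ fun i _ => ?_]
      · refine Finset.sum_congr rfl fun i _ => ?_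
        rw [integral_const_mul]
        congr 1
        rw [integral_finset_sum _ fun j _ => (hf i j).mul_const (x j)]
        simp [integral_mul_const, dotProduct]
      · exact (integrable_finset_sum _ fun j _ => (hf i j).mul_const (x j)).const_mul (x i)
    rw [key]
    refine integral_nonneg_of_ae (hpsd.mono fun ω hω => ?_)
    exact hω.dotProduct_mulVec_nonneg x

end Aux

/-- Efficiency bound for GEE sandwich covariance matrices:
`W⁻¹ Σ (W⁻¹)ᵀ ⪰ G⁻¹` in the Loewner order. -/
theorem gee_sandwich_efficiency_bound
    {Ω : Type*} [MeasurableSpace Ω] (μ : Measure Ω) [IsProbabilityMeasure μ]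
    {d M : ℕ}
    (Φ U : Ω → Matrix (Fin d) (Fin M) ℝ) (V : Ω → Matrix (Fin M) (Fin M) ℝ)
    (hVpd : ∀ᵐ ω ∂μ, (V ω).PosDef)
    (hint1 : ∀ i j, Integrable (fun ω => (Φ ω * (U ω)ᵀ) i j) μ)
    (hint2 : ∀ i j, Integrable (fun ω => (Φ ω * V ω * (Φ ω)ᵀ) i j) μ)
    (hint3 : ∀ i j, Integrable (fun ω => (U ω * (V ω)⁻¹ * (U ω)ᵀ) i j) μ)
    (W Sig G : Matrix (Fin d) (Fin d) ℝ)
    (hW : W = matExp μ fun ω => Φ ω * (U ω)ᵀ)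
    (hSig : Sig = matExp μ fun ω => Φ ω * V ω * (Φ ω)ᵀ)
    (hG : G = matExp μ fun ω => U ω * (V ω)⁻¹ * (U ω)ᵀ)
    (hWinv : IsUnit W) (hSigpd : Sig.PosDef) (hGinv : IsUnit G) :
    (W⁻¹ * Sig * (W⁻¹)ᵀ - G⁻¹).PosSemidef := by
  classical
  -- G is positive semidefinite, hence symmetric
  have hGpsd : G.PosSemidef := by
    rw [hG]
    refine matExp_posSemidef hint3 (hVpd.mono fun ω hω => ?_)
    have h := hω.posSemidef.inv.mul_mul_conjTranspose_same (U ω)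
    rwa [conjTranspose_eq_transpose_of_trivial] at h
  have hGherm : G.IsHermitian := hGpsd.1
  have hGinvT : (G⁻¹)ᵀ = G⁻¹ := by
    have := hGherm.inv
    rw [← conjTranspose_eq_transpose_of_trivial, this]
  -- the key matrix N
  set N : Matrix (Fin d) (Fin d) ℝ := W * G⁻¹ with hN
  -- the pointwise sandwich
  set f : Ω → Matrix (Fin d) (Fin d) ℝ :=
    fun ω => (Φ ω - N * U ω * (V ω)⁻¹) * V ω * (Φ ω - N * U ω * (V ω)⁻¹)ᵀ with hf
  have hfpsd : ∀ᵐ ω ∂μ, (f ω).PosSemidef := by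
    refine hVpd.mono fun ω hω => ?_
    have h := hω.posSemidef.mul_mul_conjTranspose_same (Φ ω - N * U ω * (V ω)⁻¹)
    rwa [conjTranspose_eq_transpose_of_trivial] at h
  -- pointwise expansion
  have hexpand : ∀ᵐ ω ∂μ, f ω =
      Φ ω * V ω * (Φ ω)ᵀ - (Φ ω * (U ω)ᵀ) * Nᵀ - N * (Φ ω * (U ω)ᵀ)ᵀ
        + N * (U ω * (V ω)⁻¹ * (U ω)ᵀ) * Nᵀ := by
    refine hVpd.mono fun ω hω => ?_
    have hVdet : IsUnit (V ω).det := (Matrix.isUnit_iff_isUnit_det _).1 hω.isUnit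
    have hVV : V ω * (V ω)⁻¹ = 1 := Matrix.mul_nonsing_inv _ hVdet
    have hVV' : (V ω)⁻¹ * V ω = 1 := Matrix.nonsing_inv_mul _ hVdet
    have hVinvT : ((V ω)⁻¹)ᵀ = (V ω)⁻¹ := by
      have := hω.isHermitian.inv
      rw [← conjTranspose_eq_transpose_of_trivial, this]
    have hc1 : ∀ X : Matrix (Fin M) (Fin d) ℝ, V ω * ((V ω)⁻¹ * X) = X := fun X => by
      rw [← Matrix.mul_assoc, hVV, Matrix.one_mul]
    have hc2 : ∀ X : Matrix (Fin M) (Fin d) ℝ, (V ω)⁻¹ * (V ω * X) = X := fun X => by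
      rw [← Matrix.mul_assoc, hVV', Matrix.one_mul]
    simp only [hf, transpose_sub, transpose_mul, transpose_transpose, hVinvT,
      Matrix.sub_mul, Matrix.mul_sub, Matrix.mul_assoc, hc1, hc2]
    abel
  -- integrability of the transposed cross term
  have hint1T : ∀ i j, Integrable (fun ω => (Φ ω * (U ω)ᵀ)ᵀ i j) μ := fun i j => hint1 j i
  -- expectation of the expansion
  have hEf : matExp μ f = Sig - W * Nᵀ - N * Wᵀ + N * G * Nᵀ := by
    rw [matExp_congr_ae hexpand]
    have hiA := hint2
    have hiB := integrable_matMul_const hint1 Nᵀ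
    have hiC := integrable_const_matMul hint1T N
    have hiD := integrable_matMul_const (integrable_const_matMul hint3 N) Nᵀ
    rw [matExp_add
        (f := fun ω => Φ ω * V ω * (Φ ω)ᵀ - Φ ω * (U ω)ᵀ * Nᵀ - N * (Φ ω * (U ω)ᵀ)ᵀ)
        (g := fun ω => N * (U ω * (V ω)⁻¹ * (U ω)ᵀ) * Nᵀ)
        (fun i j => ((hiA i j).sub (hiB i j)).sub (hiC i j)) hiD,
      matExp_sub
        (f := fun ω => Φ ω * V ω * (Φ ω)ᵀ - Φ ω * (U ω)ᵀ * Nᵀ)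
        (g := fun ω => N * (Φ ω * (U ω)ᵀ)ᵀ)
        (fun i j => (hiA i j).sub (hiB i j)) hiC,
      matExp_sub (f := fun ω => Φ ω * V ω * (Φ ω)ᵀ)
        (g := fun ω => Φ ω * (U ω)ᵀ * Nᵀ) hiA hiB]
    have hB : matExp μ (fun ω => Φ ω * (U ω)ᵀ * Nᵀ) = W * Nᵀ := by
      rw [matExp_matMul_const hint1 Nᵀ, ← hW]
    have hC : matExp μ (fun ω => N * (Φ ω * (U ω)ᵀ)ᵀ) = N * Wᵀ := by
      rw [matExp_const_matMul hint1T N]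
      congr 1
      rw [hW]; ext i j; simp [matExp]
    have hD : matExp μ (fun ω => N * (U ω * (V ω)⁻¹ * (U ω)ᵀ) * Nᵀ) = N * G * Nᵀ := by
      rw [matExp_matMul_const (integrable_const_matMul hint3 N) Nᵀ,
        matExp_const_matMul hint3 N, ← hG]
    rw [hB, hC, hD, ← hSig]
  -- simplify using N = W * G⁻¹ and symmetry of G
  have hGdet : IsUnit G.det := (Matrix.isUnit_iff_isUnit_det _).1 hGinv
  have hGG : G⁻¹ * G = 1 := Matrix.nonsing_inv_mul _ hGdet
  have hNT : Nᵀ = G⁻¹ * Wᵀ := by rw [hN, transpose_mul, hGinvT]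
  have hEf' : matExp μ f = Sig - W * G⁻¹ * Wᵀ := by
    rw [hEf, hNT, hN]
    have : W * G⁻¹ * G * (G⁻¹ * Wᵀ) = W * G⁻¹ * Wᵀ := by
      rw [show W * G⁻¹ * G * (G⁻¹ * Wᵀ) = W * ((G⁻¹ * G) * G⁻¹) * Wᵀ by
        simp only [Matrix.mul_assoc], hGG, Matrix.one_mul]
    rw [Matrix.mul_assoc W G⁻¹ G] at this ⊢
    rw [this]
    have h2 : W * (G⁻¹ * Wᵀ) = W * G⁻¹ * Wᵀ := by simp [Matrix.mul_assoc]
    rw [h2]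
    abel
  -- hence Sig - W G⁻¹ Wᵀ is PSD
  have hint_f : ∀ i j, Integrable (fun ω => f ω i j) μ := by
    intro i j
    refine Integrable.congr
      ((((hint2 i j).sub ((integrable_matMul_const hint1 Nᵀ) i j)).sub
        ((integrable_const_matMul hint1T N) i j)).add
        ((integrable_matMul_const (integrable_const_matMul hint3 N) Nᵀ) i j))
      (hexpand.mono fun ω hω => (congrArg (fun A => A i j) hω).symm)
  have hkey : (Sig - W * G⁻¹ * Wᵀ).PosSemidef := by
    rw [← hEf']
    exact matExp_posSemidef hint_f hfpsd
  -- conjugate by W⁻¹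
  have hfinal := hkey.mul_mul_conjTranspose_same W⁻¹
  rw [conjTranspose_eq_transpose_of_trivial] at hfinal
  have hWdet : IsUnit W.det := (Matrix.isUnit_iff_isUnit_det _).1 hWinv
  have hWW : W⁻¹ * W = 1 := Matrix.nonsing_inv_mul _ hWdet
  have heq : W⁻¹ * (Sig - W * G⁻¹ * Wᵀ) * (W⁻¹)ᵀ
      = W⁻¹ * Sig * (W⁻¹)ᵀ - G⁻¹ := by
    rw [Matrix.mul_sub, Matrix.sub_mul]
    congr 1
    have hWTinv : Wᵀ * (W⁻¹)ᵀ = 1 := by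
      rw [← transpose_mul, hWW, transpose_one]
    calc W⁻¹ * (W * G⁻¹ * Wᵀ) * (W⁻¹)ᵀ
        = (W⁻¹ * W) * G⁻¹ * (Wᵀ * (W⁻¹)ᵀ) := by simp only [Matrix.mul_assoc]
      _ = G⁻¹ := by rw [hWW, hWTinv, Matrix.one_mul, Matrix.mul_one]
  rwa [heq] at hfinal
end

section
/- Let Φ and U be random d×M real matrices and V a random M×M real matrix on a probability space, with V almost surely symmetric positive definite. Assume all entries of Φ Uᵀ, Φ V Φᵀ and U V⁻¹ Uᵀ are integrable, and that G = E[U V⁻¹ Uᵀ] is invertible. Then with W = E[Φ Uᵀ] and Σ = E[Φ V Φᵀ], one has W G⁻¹ Wᵀ ⪯ Σ in the Loewner order; equivalently, aᵀ W G⁻¹ Wᵀ a ≤ aᵀ Σ a for every a ∈ ℝᵈ. -/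
open MeasureTheory Matrix

lemma integrable_quad {Ω : Type*} [MeasurableSpace Ω] {μ : Measure Ω}
    {m n : Type*} [Fintype m] [Fintype n]
    (f : Ω → Matrix m n ℝ) (hint : ∀ i j, Integrable (fun ω => f ω i j) μ)
    (a : m → ℝ) (b : n → ℝ) :
    Integrable (fun ω => a ⬝ᵥ (f ω).mulVec b) μ := by
  simp only [dotProduct, Matrix.mulVec]
  apply integrable_finset_sum
  intro i _
  apply Integrable.const_mul
  apply integrable_finset_sum
  intro j _
  exact (hint i j).mul_const _

lemma dot_matExp {Ω : Type*} [MeasurableSpace Ω] (μ : Measure Ω)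
    {m n : Type*} [Fintype m] [Fintype n]
    (f : Ω → Matrix m n ℝ) (hint : ∀ i j, Integrable (fun ω => f ω i j) μ)
    (a : m → ℝ) (b : n → ℝ) :
    a ⬝ᵥ (matExp μ f).mulVec b = ∫ ω, a ⬝ᵥ (f ω).mulVec b ∂μ := by
  simp only [dotProduct, Matrix.mulVec, matExp, Matrix.of_apply]
  rw [integral_finset_sum]
  · apply Finset.sum_congr rfl
    intro i _
    rw [integral_const_mul]
    congr 1
    rw [integral_finset_sum]
    · apply Finset.sum_congr rfl
      intro j _
      rw [integral_mul_const]
    · intro j _; exact (hint i j).mul_const _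
  · intro i _
    apply Integrable.const_mul
    apply integrable_finset_sum
    intro j _
    exact (hint i j).mul_const _

/-- Pointwise Cauchy–Schwarz via positive definiteness. -/
lemma pointwise_ineq {n : Type*} [Fintype n] [DecidableEq n]
    {V : Matrix n n ℝ} (hV : V.PosDef) (x y : n → ℝ) :
    2 * (x ⬝ᵥ y) ≤ x ⬝ᵥ V.mulVec x + y ⬝ᵥ V⁻¹.mulVec y := by
  have hdet : IsUnit V.det := isUnit_iff_ne_zero.2 (ne_of_gt hV.det_pos)
  have hVsym : Vᵀ = V := hV.isHermitian
  set w : n → ℝ := V⁻¹.mulVec y with hw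
  have hVw : V.mulVec w = y := by
    rw [hw, Matrix.mulVec_mulVec, Matrix.mul_nonsing_inv _ hdet, Matrix.one_mulVec]
  have h0 : 0 ≤ (x - w) ⬝ᵥ V.mulVec (x - w) := by
    have := hV.posSemidef.dotProduct_mulVec_nonneg (x - w); rwa [star_trivial] at this
  have hcross : w ⬝ᵥ V.mulVec x = x ⬝ᵥ y := by
    rw [Matrix.dotProduct_mulVec, ← Matrix.mulVec_transpose, hVsym, hVw, dotProduct_comm]
  have hexp : (x - w) ⬝ᵥ V.mulVec (x - w)
      = x ⬝ᵥ V.mulVec x - x ⬝ᵥ y - w ⬝ᵥ V.mulVec x + y ⬝ᵥ V⁻¹.mulVec y := by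
    have h1 : w ⬝ᵥ y = y ⬝ᵥ V⁻¹.mulVec y := by rw [dotProduct_comm, hw]
    have h2 : x ⬝ᵥ V.mulVec w = x ⬝ᵥ y := by rw [hVw]
    simp only [Matrix.mulVec_sub, sub_dotProduct, dotProduct_sub, hVw, h1, h2]
    ring
  rw [hexp, hcross] at h0
  linarith

/-- Cauchy–Schwarz-type inequality for GEE: `W G⁻¹ Wᵀ ⪯ Σ` in the Loewner order,
equivalently `aᵀ W G⁻¹ Wᵀ a ≤ aᵀ Σ a` for every `a`. -/
theorem gee_cauchy_schwarz_loewner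
    {Ω : Type*} [MeasurableSpace Ω] (μ : Measure Ω) [IsProbabilityMeasure μ]
    {d M : ℕ}
    (Φ U : Ω → Matrix (Fin d) (Fin M) ℝ) (V : Ω → Matrix (Fin M) (Fin M) ℝ)
    (hVpd : ∀ᵐ ω ∂μ, (V ω).PosDef)
    (hint1 : ∀ i j, Integrable (fun ω => (Φ ω * (U ω)ᵀ) i j) μ)
    (hint2 : ∀ i j, Integrable (fun ω => (Φ ω * V ω * (Φ ω)ᵀ) i j) μ)
    (hint3 : ∀ i j, Integrable (fun ω => (U ω * (V ω)⁻¹ * (U ω)ᵀ) i j) μ)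
    (W Sig G : Matrix (Fin d) (Fin d) ℝ)
    (hW : W = matExp μ fun ω => Φ ω * (U ω)ᵀ)
    (hSig : Sig = matExp μ fun ω => Φ ω * V ω * (Φ ω)ᵀ)
    (hG : G = matExp μ fun ω => U ω * (V ω)⁻¹ * (U ω)ᵀ)
    (hGinv : IsUnit G) :
    (Sig - W * G⁻¹ * Wᵀ).PosSemidef ∧
      ∀ a : Fin d → ℝ, a ⬝ᵥ (W * G⁻¹ * Wᵀ).mulVec a ≤ a ⬝ᵥ Sig.mulVec a := by
  have hGdet : IsUnit G.det := (Matrix.isUnit_iff_isUnit_det G).1 hGinv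
  -- symmetry of Sig
  have hSigsym : Sigᵀ = Sig := by
    subst hSig
    ext i j
    simp only [Matrix.transpose_apply, matExp, Matrix.of_apply]
    apply integral_congr_ae
    filter_upwards [hVpd] with ω hV
    have hVsym : (V ω)ᵀ = V ω := hV.isHermitian
    have h : (Φ ω * V ω * (Φ ω)ᵀ)ᵀ = Φ ω * V ω * (Φ ω)ᵀ := by
      rw [Matrix.transpose_mul, Matrix.transpose_mul, Matrix.transpose_transpose, hVsym,
        Matrix.mul_assoc]
    exact congrFun (congrFun h i) j
  -- symmetry of G
  have hGsym : Gᵀ = G := by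
    subst hG
    ext i j
    simp only [Matrix.transpose_apply, matExp, Matrix.of_apply]
    apply integral_congr_ae
    filter_upwards [hVpd] with ω hV
    have hVsym : ((V ω)⁻¹)ᵀ = (V ω)⁻¹ := by
      rw [Matrix.transpose_nonsing_inv]
      congr 1
      exact hV.isHermitian
    have h : (U ω * (V ω)⁻¹ * (U ω)ᵀ)ᵀ = U ω * (V ω)⁻¹ * (U ω)ᵀ := by
      rw [Matrix.transpose_mul, Matrix.transpose_mul, Matrix.transpose_transpose, hVsym,
        Matrix.mul_assoc]
    exact congrFun (congrFun h i) j
  have hGisym : (G⁻¹)ᵀ = G⁻¹ := by rw [Matrix.transpose_nonsing_inv, hGsym]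
  -- the key quadratic form inequality
  have key : ∀ a : Fin d → ℝ, a ⬝ᵥ (W * G⁻¹ * Wᵀ).mulVec a ≤ a ⬝ᵥ Sig.mulVec a := by
    intro a
    set b : Fin d → ℝ := (G⁻¹ * Wᵀ).mulVec a with hb
    set t : ℝ := a ⬝ᵥ (W * G⁻¹ * Wᵀ).mulVec a with ht
    have h1 : a ⬝ᵥ W.mulVec b = t := by
      rw [hb, Matrix.mulVec_mulVec, ht, ← Matrix.mul_assoc]
    have h2 : b ⬝ᵥ G.mulVec b = t := by
      have hGb : G.mulVec b = Wᵀ.mulVec a := by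
        rw [hb, Matrix.mulVec_mulVec, ← Matrix.mul_assoc,
          Matrix.mul_nonsing_inv _ hGdet, Matrix.one_mul]
      rw [hGb, hb, ht, dotProduct_comm,
        Matrix.mul_assoc W, ← Matrix.mulVec_mulVec a W (G⁻¹ * Wᵀ),
        Matrix.dotProduct_mulVec a W, ← Matrix.mulVec_transpose W a]
    -- integrated inequality
    have hineq : 2 * (a ⬝ᵥ W.mulVec b) ≤ a ⬝ᵥ Sig.mulVec a + b ⬝ᵥ G.mulVec b := by
      rw [hW, hSig, hG, dot_matExp μ _ hint1 a b, dot_matExp μ _ hint2 a a,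
        dot_matExp μ _ hint3 b b, ← integral_const_mul, ← integral_add
          (integrable_quad _ hint2 a a) (integrable_quad _ hint3 b b)]
      apply integral_mono_ae ((integrable_quad _ hint1 a b).const_mul 2)
        ((integrable_quad _ hint2 a a).add (integrable_quad _ hint3 b b))
      filter_upwards [hVpd] with ω hV
      have e1 : a ⬝ᵥ (Φ ω * (U ω)ᵀ).mulVec b
          = ((Φ ω)ᵀ.mulVec a) ⬝ᵥ ((U ω)ᵀ.mulVec b) := by
        rw [← Matrix.mulVec_mulVec, Matrix.dotProduct_mulVec, ← Matrix.mulVec_transpose]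
      have e2 : a ⬝ᵥ (Φ ω * V ω * (Φ ω)ᵀ).mulVec a
          = ((Φ ω)ᵀ.mulVec a) ⬝ᵥ (V ω).mulVec ((Φ ω)ᵀ.mulVec a) := by
        rw [← Matrix.mulVec_mulVec, ← Matrix.mulVec_mulVec, Matrix.dotProduct_mulVec,
          ← Matrix.mulVec_transpose]
      have e3 : b ⬝ᵥ (U ω * (V ω)⁻¹ * (U ω)ᵀ).mulVec b
          = ((U ω)ᵀ.mulVec b) ⬝ᵥ (V ω)⁻¹.mulVec ((U ω)ᵀ.mulVec b) := by
        rw [← Matrix.mulVec_mulVec, ← Matrix.mulVec_mulVec, Matrix.dotProduct_mulVec,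
          ← Matrix.mulVec_transpose]
      simp only [Pi.add_apply]
      rw [e1, e2, e3]
      exact pointwise_ineq hV _ _
    linarith [h1, h2, hineq]
  refine ⟨Matrix.PosSemidef.of_dotProduct_mulVec_nonneg ?_ (fun x => ?_), key⟩
  · show (Sig - W * G⁻¹ * Wᵀ)ᵀ = _
    rw [Matrix.transpose_sub, hSigsym, Matrix.transpose_mul, Matrix.transpose_mul,
      hGisym, Matrix.transpose_transpose, Matrix.mul_assoc]
  · simp only [star_trivial, Matrix.sub_mulVec, dotProduct_sub]
    linarith [key x]
end

section
/- Let (Ω, F, P) be a probability space carrying random elements S (in a measurable state space), A (in a finite nonempty action space), a real-valued integrable random variable R, and S' (in the state space). Let κ be a Markov kernel from the action–state space to the state space such that the conditional distribution of S' given (A, S) is κ(A, S), and let r be a bounded measurable function with E[R | A, S] = r(A, S) almost surely. Let φ : A × S → ℝᵈ be bounded measurable and β* ∈ ℝᵈ be such that Q*(a, s) := φ(a,s)ᵀβ* satisfies the Bellman optimality equation Q*(a, s) = r(a, s) + γ ∫ max_{a'} φ(a', s')ᵀβ* dκ(a,s)(s') for all (a, s), where γ ∈ [0,1). Then for every bounded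 measurable Φ : A × S → ℝᵈ, the estimating equation is unbiased at β*: E[ Φ(A, S) · ( R + γ max_{a'} φ(a', S')ᵀβ* − φ(A, S)ᵀβ* ) ] = 0 ∈ ℝᵈ. -/
open MeasureTheory ProbabilityTheory Matrix

lemma aux_dotm {δ : Type*} [MeasurableSpace δ] {d : ℕ} {f : δ → Fin d → ℝ}
    (hf : Measurable f) (β : Fin d → ℝ) : Measurable (fun x => f x ⬝ᵥ β) := by
  simp only [dotProduct]
  exact Finset.measurable_sum _ fun i _ => ((measurable_pi_apply i).comp hf).mul_const _

lemma aux_condY {Ω : Type*} {m m0 : MeasurableSpace Ω} (hm : m ≤ m0)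
    (μ : @Measure Ω m0) [IsFiniteMeasure μ]
    (R g q rv gv : Ω → ℝ) (γ : ℝ)
    (hR : Integrable R μ) (hg : Integrable g μ) (hq : Integrable q μ)
    (hq_sm : StronglyMeasurable[m] q)
    (hRc : μ[R | m] =ᵐ[μ] rv) (hgc : μ[g | m] =ᵐ[μ] gv)
    (hzero : ∀ ω, rv ω + γ * gv ω - q ω = 0) :
    μ[(fun ω => R ω + γ * g ω - q ω) | m] =ᵐ[μ] 0 := by
  haveI : SigmaFinite (μ.trim hm) := by infer_instance
  have hfun : (fun ω => R ω + γ * g ω - q ω) = (R + fun ω => γ * g ω) - q := rfl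
  rw [hfun]
  have hsub := condExp_sub (μ := μ) (m := m) (hR.add (hg.const_mul γ)) hq
  have hadd := condExp_add (μ := μ) (m := m) hR (hg.const_mul γ)
  have hsmul : μ[(fun ω => γ * g ω) | m] =ᵐ[μ] γ • μ[g | m] := by
    have := condExp_smul (μ := μ) (m := m) γ g
    exact this
  have hQc : μ[q | m] =ᵐ[μ] q := by
    rw [condExp_of_stronglyMeasurable hm hq_sm hq]
  filter_upwards [hsub, hadd, hsmul, hQc, hRc, hgc] with ω h1 h2 h3 h4 h5 h6
  simp only [Pi.sub_apply, Pi.add_apply, Pi.smul_apply, Pi.zero_apply, smul_eq_mul] at *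
  rw [h1, h2, h3, h4, h5, h6]
  exact hzero ω

lemma aux_int_zero {Ω : Type*} {m m0 : MeasurableSpace Ω} (hm : m ≤ m0)
    (μ : @Measure Ω m0) [IsFiniteMeasure μ]
    (Y c : Ω → ℝ) (hY : Integrable Y μ)
    (hc_sm : StronglyMeasurable[m] c) (hc_aesm : AEStronglyMeasurable c μ)
    (hc_bd : ∃ C, ∀ ω, ‖c ω‖ ≤ C)
    (hcondY : μ[Y | m] =ᵐ[μ] 0) :
    ∫ ω, Y ω * c ω ∂μ = 0 := by
  haveI : SigmaFinite (μ.trim hm) := by infer_instance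
  have hcY_int : Integrable (c * Y) μ := hY.bdd_mul hc_aesm (Filter.Eventually.of_forall hc_bd.choose_spec)
  have hmul := condExp_mul_of_stronglyMeasurable_left (μ := μ) hc_sm hcY_int hY
  have hzero : μ[c * Y | m] =ᵐ[μ] 0 := by
    filter_upwards [hmul, hcondY] with ω h1 h2
    simp only [Pi.mul_apply, Pi.zero_apply] at *
    rw [h1, h2, mul_zero]
  have h : ∫ ω, c ω * Y ω ∂μ = 0 := by
    calc ∫ ω, c ω * Y ω ∂μ = ∫ ω, (μ[c * Y | m]) ω ∂μ := (integral_condExp hm).symm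
      _ = ∫ ω, (0 : Ω → ℝ) ω ∂μ := integral_congr_ae hzero
      _ = 0 := by simp
  simpa [mul_comm] using h

/-- Unbiasedness of the estimating equation at the Bellman-optimal parameter `β*`:
for any bounded measurable instrument `Φ`,
`E[Φ(A, S) · (R + γ max_{a'} φ(a', S')ᵀβ* − φ(A, S)ᵀβ*)] = 0`. -/
theorem estimating_equation_unbiased
    {Ω 𝒮 𝒜 : Type*} [MeasurableSpace Ω] [MeasurableSpace 𝒮] [MeasurableSpace 𝒜]
    [Fintype 𝒜] [Nonempty 𝒜]
    (μ : Measure Ω) [IsProbabilityMeasure μ]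
    (S : Ω → 𝒮) (A : Ω → 𝒜) (R : Ω → ℝ) (S' : Ω → 𝒮)
    (hS : Measurable S) (hA : Measurable A) (hS' : Measurable S')
    (hR : Integrable R μ)
    (κ : Kernel (𝒜 × 𝒮) 𝒮) [IsMarkovKernel κ]
    {d : ℕ} (φ Φ : 𝒜 × 𝒮 → (Fin d → ℝ))
    (hφm : Measurable φ) (hφb : ∃ C, ∀ p, ‖φ p‖ ≤ C)
    (hΦm : Measurable Φ) (hΦb : ∃ C, ∀ p, ‖Φ p‖ ≤ C)
    (r : 𝒜 × 𝒮 → ℝ) (hrm : Measurable r) (hrb : ∃ C, ∀ p, |r p| ≤ C)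
    (γ : ℝ) (hγ0 : 0 ≤ γ) (hγ1 : γ < 1)
    (β : Fin d → ℝ)
    (hbellman : ∀ a : 𝒜, ∀ s : 𝒮,
      φ (a, s) ⬝ᵥ β = r (a, s) + γ * ∫ s', (⨆ a', φ (a', s') ⬝ᵥ β) ∂(κ (a, s)))
    (hcondR : μ[R | MeasurableSpace.comap (fun ω => (A ω, S ω)) inferInstance]
      =ᵐ[μ] fun ω => r (A ω, S ω))
    (hcondS' : ∀ g : 𝒮 → ℝ, Measurable g → (∃ C, ∀ x, |g x| ≤ C) →
      μ[(fun ω => g (S' ω)) | MeasurableSpace.comap (fun ω => (A ω, S ω)) inferInstance]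
        =ᵐ[μ] fun ω => ∫ s', g s' ∂(κ (A ω, S ω))) :
    (∫ ω, (R ω + γ * (⨆ a', φ (a', S' ω) ⬝ᵥ β) - φ (A ω, S ω) ⬝ᵥ β) • Φ (A ω, S ω) ∂μ)
      = 0 := by
  classical
  obtain ⟨Cφ, hCφ⟩ := hφb
  obtain ⟨CΦ, hCΦ⟩ := hΦb
  have hAS : Measurable (fun ω => (A ω, S ω)) := hA.prodMk hS
  have hm_le : MeasurableSpace.comap (fun ω => (A ω, S ω)) inferInstance
      ≤ ‹MeasurableSpace Ω› := MeasurableSpace.comap_le_iff_le_map.mpr hAS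
  have hASm : Measurable[MeasurableSpace.comap (fun ω => (A ω, S ω)) inferInstance]
      (fun ω => (A ω, S ω)) := fun s hs => ⟨s, hs, rfl⟩
  -- dot products with β
  set Bβ : ℝ := ∑ i, |β i| with hBβ
  have hBβ0 : 0 ≤ Bβ := Finset.sum_nonneg fun i _ => abs_nonneg _
  have hdotbd : ∀ v : Fin d → ℝ, |v ⬝ᵥ β| ≤ ‖v‖ * Bβ := by
    intro v
    calc |v ⬝ᵥ β| ≤ ∑ i, |v i * β i| := Finset.abs_sum_le_sum_abs _ _
      _ ≤ ∑ i, ‖v‖ * |β i| := by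
          refine Finset.sum_le_sum fun i _ => ?_
          rw [abs_mul]
          refine mul_le_mul_of_nonneg_right ?_ (abs_nonneg _)
          simpa [Real.norm_eq_abs] using norm_le_pi_norm v i
      _ = ‖v‖ * Bβ := by rw [hBβ, Finset.mul_sum]
  -- the max function M
  set M : 𝒮 → ℝ := fun s' => ⨆ a', φ (a', s') ⬝ᵥ β with hM_def
  have hMeq : M = fun s' => Finset.univ.sup' Finset.univ_nonempty
      (fun a' => φ (a', s') ⬝ᵥ β) := by
    funext s'; rw [hM_def, Finset.sup'_univ_eq_ciSup]
  have hMm : Measurable M := by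
    rw [hMeq]
    have heq : (fun s' => Finset.univ.sup' Finset.univ_nonempty
        (fun a' => φ (a', s') ⬝ᵥ β))
        = Finset.univ.sup' Finset.univ_nonempty (fun (a' : 𝒜) (s' : 𝒮) => φ (a', s') ⬝ᵥ β) := by
      funext s'
      simp only [Finset.sup'_apply]
    rw [heq]
    exact Finset.measurable_sup' _ fun a' _ => aux_dotm (hφm.comp (measurable_prodMk_left : Measurable fun s : 𝒮 => (a', s))) β
  set CM : ℝ := (max Cφ 0) * Bβ with hCM
  have hvb : ∀ p, |φ p ⬝ᵥ β| ≤ CM := fun p =>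
    (hdotbd _).trans (mul_le_mul_of_nonneg_right ((hCφ _).trans (le_max_left _ _)) hBβ0)
  have hMb : ∀ s', |M s'| ≤ CM := by
    intro s'
    rw [hMeq, abs_le]
    constructor
    · refine le_trans ?_ (Finset.le_sup' (fun a' => φ (a', s') ⬝ᵥ β)
        (Finset.mem_univ (Classical.arbitrary 𝒜)))
      have := abs_le.mp (hvb (Classical.arbitrary 𝒜, s'))
      linarith [this.1]
    · refine Finset.sup'_le _ _ fun a' _ => ?_
      exact le_trans (le_abs_self _) (hvb _)
  have hCM0 : 0 ≤ CM := mul_nonneg (le_max_right _ _) hBβ0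
  -- Q := φ ⬝ᵥ β
  have hQm : Measurable (fun p : 𝒜 × 𝒮 => φ p ⬝ᵥ β) := aux_dotm hφm β
  -- integrability of bounded measurable functions
  have hbd_int : ∀ (f : Ω → ℝ), Measurable f → ∀ C : ℝ, (∀ ω, |f ω| ≤ C) →
      Integrable f μ := by
    intro f hf C hC
    exact (integrable_const C).mono' hf.aestronglyMeasurable (Filter.Eventually.of_forall hC)
  -- the residual Y
  set Y : Ω → ℝ := fun ω => R ω + γ * M (S' ω) - φ (A ω, S ω) ⬝ᵥ β with hY_def
  have hMS'int : Integrable (fun ω => M (S' ω)) μ :=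
    hbd_int _ (hMm.comp hS') CM fun ω => hMb _
  have hQASint : Integrable (fun ω => φ (A ω, S ω) ⬝ᵥ β) μ :=
    hbd_int _ (hQm.comp hAS) CM fun ω => hvb _
  have hYint : Integrable Y μ := by
    rw [hY_def]
    exact (hR.add (hMS'int.const_mul γ)).sub hQASint
  -- conditional expectation of Y is 0 a.e.
  have hcondM := hcondS' M hMm ⟨CM, hMb⟩
  have hcondY : μ[Y | MeasurableSpace.comap (fun ω => (A ω, S ω)) inferInstance]
      =ᵐ[μ] 0 := by
    refine aux_condY hm_le μ R (fun ω => M (S' ω)) (fun ω => φ (A ω, S ω) ⬝ᵥ β)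
      (fun ω => r (A ω, S ω)) (fun ω => ∫ s', M s' ∂(κ (A ω, S ω))) γ
      hR hMS'int hQASint ((hQm.comp hASm).stronglyMeasurable) hcondR hcondM ?_
    intro ω
    have := hbellman (A ω) (S ω)
    simp only [hM_def] at this ⊢
    linarith
  -- integrability of the vector integrand
  have hΦASm : Measurable (fun ω => Φ (A ω, S ω)) := hΦm.comp hAS
  have hint : Integrable (fun ω => Y ω • Φ (A ω, S ω)) μ := by
    have hbound : ∀ ω, ‖Y ω • Φ (A ω, S ω)‖ ≤ (|R ω| + (CM + CM)) * max CΦ 0 := by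
      intro ω
      rw [norm_smul]
      have h1 : ‖Y ω‖ ≤ |R ω| + (CM + CM) := by
        rw [hY_def]
        have h2 := hMb (S' ω)
        have h3 := hvb (A ω, S ω)
        have hγM : |γ * M (S' ω)| ≤ CM := by
          rw [abs_mul]
          calc |γ| * |M (S' ω)| ≤ 1 * CM := by
                refine mul_le_mul ?_ (hMb _) (abs_nonneg _) zero_le_one
                rw [abs_of_nonneg hγ0]; exact hγ1.le
            _ = CM := one_mul _
        calc ‖R ω + γ * M (S' ω) - φ (A ω, S ω) ⬝ᵥ β‖
            ≤ |R ω + γ * M (S' ω)| + |φ (A ω, S ω) ⬝ᵥ β| := abs_sub _ _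
          _ ≤ (|R ω| + |γ * M (S' ω)|) + |φ (A ω, S ω) ⬝ᵥ β| :=
              add_le_add (abs_add_le _ _) le_rfl
          _ ≤ |R ω| + (CM + CM) := by linarith
      exact mul_le_mul h1 ((hCΦ _).trans (le_max_left _ _)) (norm_nonneg _)
        (by positivity)
    refine Integrable.mono' (g := fun ω => (|R ω| + (CM + CM)) * max CΦ 0) ?_ ?_
      (Filter.Eventually.of_forall hbound)
    · exact (hR.abs.add (integrable_const _)).mul_const _
    · have hYaesm : AEStronglyMeasurable Y μ :=
        (hR.aestronglyMeasurable.add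
          (((hMm.comp hS').aestronglyMeasurable).const_mul γ)).sub
          (hQm.comp hAS).aestronglyMeasurable
      exact hYaesm.smul hΦASm.aestronglyMeasurable
  funext i
  have hproj : (∫ ω, Y ω • Φ (A ω, S ω) ∂μ) i = ∫ ω, Y ω * Φ (A ω, S ω) i ∂μ := by
    have := ((ContinuousLinearMap.proj (R := ℝ) (φ := fun _ : Fin d => ℝ)
      i).integral_comp_comm hint).symm
    simpa [smul_eq_mul] using this
  have hgoal : (∫ ω, Y ω • Φ (A ω, S ω) ∂μ) i = 0 := by
    rw [hproj]
    refine aux_int_zero hm_le μ Y (fun ω => Φ (A ω, S ω) i) hYint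
      ((((measurable_pi_apply i).comp hΦm).comp hASm).stronglyMeasurable)
      ((((measurable_pi_apply i).comp hΦm).comp hAS).aestronglyMeasurable)
      ⟨CΦ, fun ω => (norm_le_pi_norm _ i).trans (hCΦ _)⟩ hcondY
  simpa [hY_def] using hgoal
end

section
/- Let x and y be square-integrable random vectors in ℝᴹ on a probability space, let γ ∈ [0,1), and suppose there exist constants c > 0 and K > 0 such that E‖x‖² − γ² E‖y‖² ≥ c, E‖x‖² ≤ K and E‖y‖² ≤ K. Then E‖x‖² − γ |E⟨x, y⟩| ≥ c^{3/2} / ((1 + γ) √K). (This is the key quantitative step in verifying the stability assumption for GFQI under ε-greedy data collection: with x = the weighted feature vector φ̃ᵀν of the current state–action pairs in a cluster and y = that of the next states under the optimal policy, it shows the coercivity constant of W(Φ) is bounded below whenever the minimum eigenvalue condition λ_min(E[φφᵀ − γ²φ'φ'ᵀ]) ≥ c* holds.) -/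
open MeasureTheory RealInnerProductSpace

set_option maxHeartbeats 1600000 in
/-- Quantitative coercivity step used to verify the stability assumption for GFQI:
if `E‖x‖² − γ² E‖y‖² ≥ c` with `E‖x‖² ≤ K` and `E‖y‖² ≤ K`, then
`E‖x‖² − γ |E⟨x, y⟩| ≥ c^{3/2} / ((1 + γ) √K)`. -/
theorem stability_coercivity_bound
    {Ω : Type*} [MeasurableSpace Ω] (μ : Measure Ω) [IsProbabilityMeasure μ]
    {M : ℕ} (x y : Ω → EuclideanSpace ℝ (Fin M))
    (hx : MemLp x 2 μ) (hy : MemLp y 2 μ)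
    (γ : ℝ) (hγ0 : 0 ≤ γ) (hγ1 : γ < 1)
    (c K : ℝ) (hc : 0 < c) (hK : 0 < K)
    (h1 : c ≤ (∫ ω, ‖x ω‖ ^ 2 ∂μ) - γ ^ 2 * ∫ ω, ‖y ω‖ ^ 2 ∂μ)
    (h2 : (∫ ω, ‖x ω‖ ^ 2 ∂μ) ≤ K) (h3 : (∫ ω, ‖y ω‖ ^ 2 ∂μ) ≤ K) :
    c ^ ((3 : ℝ) / 2) / ((1 + γ) * Real.sqrt K) ≤
      (∫ ω, ‖x ω‖ ^ 2 ∂μ) - γ * |∫ ω, ⟪x ω, y ω⟫ ∂μ| := by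
  set X : Lp (EuclideanSpace ℝ (Fin M)) 2 μ := hx.toLp x with hX
  set Y : Lp (EuclideanSpace ℝ (Fin M)) 2 μ := hy.toLp y with hY
  -- identify integrals with L² inner products / norms
  have hxX : ∀ᵐ ω ∂μ, X ω = x ω := hx.coeFn_toLp
  have hyY : ∀ᵐ ω ∂μ, Y ω = y ω := hy.coeFn_toLp
  have hIXY : ∫ ω, ⟪x ω, y ω⟫ ∂μ = ⟪X, Y⟫ := by
    rw [L2.inner_def]
    refine integral_congr_ae ?_
    filter_upwards [hxX, hyY] with ω h1 h2
    rw [h1, h2]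
  have hIXX : ∫ ω, ‖x ω‖ ^ 2 ∂μ = ‖X‖ ^ 2 := by
    rw [← real_inner_self_eq_norm_sq, L2.inner_def]
    refine integral_congr_ae ?_
    filter_upwards [hxX] with ω h1
    rw [h1, real_inner_self_eq_norm_sq]
  have hIYY : ∫ ω, ‖y ω‖ ^ 2 ∂μ = ‖Y‖ ^ 2 := by
    rw [← real_inner_self_eq_norm_sq, L2.inner_def]
    refine integral_congr_ae ?_
    filter_upwards [hyY] with ω h1
    rw [h1, real_inner_self_eq_norm_sq]
  rw [hIXY, hIXX]
  rw [hIXX] at h1 h2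
  rw [hIYY] at h1
  rw [hIYY] at h3
  clear_value X Y
  set a := ‖X‖ with ha
  set b := ‖Y‖ with hb
  clear_value a b
  have ha0 : 0 ≤ a := ha ▸ norm_nonneg _
  have hb0 : 0 ≤ b := hb ▸ norm_nonneg _
  have hCS : |⟪X, Y⟫| ≤ a * b := ha ▸ hb ▸ abs_real_inner_le_norm X Y
  -- it suffices to bound `a² - γ a b`
  have key : c ^ ((3 : ℝ) / 2) / ((1 + γ) * Real.sqrt K) ≤ a ^ 2 - γ * (a * b) := by
    have hsc : Real.sqrt c ^ 2 = c := Real.sq_sqrt hc.le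
    have hsK : Real.sqrt K ^ 2 = K := Real.sq_sqrt hK.le
    have hsc0 : 0 < Real.sqrt c := Real.sqrt_pos.2 hc
    have hsK0 : 0 < Real.sqrt K := Real.sqrt_pos.2 hK
    have hrw : c ^ ((3 : ℝ) / 2) = c * Real.sqrt c := by
      rw [show (3:ℝ)/2 = 1 + 1/2 by norm_num, Real.rpow_add hc, Real.rpow_one,
        Real.sqrt_eq_rpow]
    rw [hrw, div_le_iff₀ (by positivity)]
    have haK : a ≤ Real.sqrt K := by
      rw [show a = Real.sqrt (a^2) by rw [Real.sqrt_sq ha0]]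
      exact Real.sqrt_le_sqrt h2
    have hbK : b ≤ Real.sqrt K := by
      rw [show b = Real.sqrt (b^2) by rw [Real.sqrt_sq hb0]]
      exact Real.sqrt_le_sqrt h3
    have hac : Real.sqrt c ≤ a := by
      rw [show a = Real.sqrt (a^2) by rw [Real.sqrt_sq ha0]]
      exact Real.sqrt_le_sqrt (by nlinarith [sq_nonneg b, sq_nonneg γ, mul_nonneg (mul_nonneg hγ0 hγ0) (sq_nonneg b)])
    have hab : γ * b ≤ a := by
      nlinarith [sq_nonneg (a - γ*b), sq_nonneg (a + γ*b), mul_nonneg hγ0 hb0]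
    have hpos0 : 0 ≤ a ^ 2 - γ ^ 2 * b ^ 2 := by linarith
    have e1 : c * Real.sqrt c ≤ (a ^ 2 - γ ^ 2 * b ^ 2) * a :=
      mul_le_mul h1 hac hsc0.le hpos0
    have e2 : (a ^ 2 - γ ^ 2 * b ^ 2) * a = (a ^ 2 - γ * (a * b)) * (a + γ * b) := by ring
    have hcoef : 0 ≤ a ^ 2 - γ * (a * b) := by nlinarith [mul_nonneg ha0 (sub_nonneg.2 hab)]
    have hsum : a + γ * b ≤ (1 + γ) * Real.sqrt K := by
      have := mul_le_mul_of_nonneg_left hbK hγ0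
      nlinarith
    have e3 : (a ^ 2 - γ * (a * b)) * (a + γ * b) ≤
        (a ^ 2 - γ * (a * b)) * ((1 + γ) * Real.sqrt K) :=
      mul_le_mul_of_nonneg_left hsum hcoef
    calc c * Real.sqrt c ≤ (a ^ 2 - γ ^ 2 * b ^ 2) * a := e1
      _ = (a ^ 2 - γ * (a * b)) * (a + γ * b) := e2
      _ ≤ (a ^ 2 - γ * (a * b)) * ((1 + γ) * Real.sqrt K) := e3
  have : γ * |⟪X, Y⟫| ≤ γ * (a * b) := mul_le_mul_of_nonneg_left hCS hγ0
  linarith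
end
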